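/- Let A be the n×n nilpotent upper-shift companion matrix (ones on the superdiagonal, zeros elsewhere) and b = e_n the last standard basis vector. Then a Hermitian matrix Σ belongs to range Γ (i.e., Σ = (1/2π)∫G(θ)dμ(θ)G(θ)* for some signed measure dμ, where G(θ) = (I−e^{−iθ}A)^{−1}b) if and only if Σ is a Hermitian Toeplitz matrix. -/

import Mathlib

open Matrix MeasureTheory

noncomputable def Gv {n : ℕ} (A : Matrix (Fin n) (Fin n) ℂ) (b : Fin n → ℂ) (θ : ℝ) :
    Fin n → ℂ :=
  ((1 : Matrix (Fin n) (Fin n) ℂ) - Complex.exp (-(θ : ℂ) * Complex.I) • A)⁻¹ *ᵥ b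

/-- Membership in the range of Γ : signed measures → Hermitian matrices,
Γ(dμ) = (1/2π) ∫ G(θ) dμ(θ) G(θ)*, via Jordan decomposition dμ = dμ₊ − dμ₋. -/
def inRangeGamma {n : ℕ} (A : Matrix (Fin n) (Fin n) ℂ) (b : Fin n → ℂ)
    (S : Matrix (Fin n) (Fin n) ℂ) : Prop :=
  ∃ (μ ν : Measure ℝ), IsFiniteMeasure μ ∧ IsFiniteMeasure ν ∧
    ∀ i j, S i j = (1 / (2 * Real.pi) : ℝ) *
      ((∫ θ in Set.Ico (0 : ℝ) (2 * Real.pi), Gv A b θ i * star (Gv A b θ j) ∂μ)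
        - ∫ θ in Set.Ico (0 : ℝ) (2 * Real.pi), Gv A b θ i * star (Gv A b θ j) ∂ν)

/-- The matrix is Toeplitz: entries depend only on the difference of the indices. -/
def IsToeplitz {n : ℕ} (S : Matrix (Fin n) (Fin n) ℂ) : Prop :=
  ∀ i j k l : Fin n, (i : ℤ) - (j : ℤ) = (k : ℤ) - (l : ℤ) → S i j = S k l


lemma Gv_eq {n : ℕ} (hn : 0 < n)
    (A : Matrix (Fin n) (Fin n) ℂ)
    (hA : A = Matrix.of fun i j : Fin n => if (j : ℕ) = (i : ℕ) + 1 then (1 : ℂ) else 0)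
    (b : Fin n → ℂ) (hb : b = fun i : Fin n => if (i : ℕ) = n - 1 then (1 : ℂ) else 0)
    (θ : ℝ) :
    Gv A b θ = fun i : Fin n => Complex.exp (-(θ : ℂ) * Complex.I) ^ (n - 1 - (i : ℕ)) := by
  set z := Complex.exp (-(θ : ℂ) * Complex.I) with hzdef
  set M := (1 : Matrix (Fin n) (Fin n) ℂ) - z • A with hMdef
  have hMij : ∀ i j : Fin n, M i j =
      (if i = j then 1 else 0) - (if (j : ℕ) = (i : ℕ) + 1 then z else 0) := by
    intro i j
    simp [hMdef, hA, Matrix.sub_apply, Matrix.smul_apply, Matrix.one_apply, mul_ite]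
  have hBT : M.BlockTriangular id := by
    intro i j hij
    have hij' : (j : ℕ) < (i : ℕ) := hij
    rw [hMij]
    rw [if_neg, if_neg]
    · ring
    · omega
    · intro h; rw [h] at hij'; omega
  have hdet : M.det = 1 := by
    rw [Matrix.det_of_upperTriangular hBT]
    apply Finset.prod_eq_one
    intro i _
    rw [hMij]
    simp
  have hu : IsUnit M.det := by rw [hdet]; exact isUnit_one
  set g : Fin n → ℂ := fun i => z ^ (n - 1 - (i : ℕ)) with hgdef
  have hMg : M *ᵥ g = b := by
    funext i
    have h1 : (M *ᵥ g) i = ∑ j, M i j * g j := by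
      simp [Matrix.mulVec, dotProduct]
    rw [h1]
    have h2 : ∀ j : Fin n, M i j * g j =
        (if i = j then g j else 0) - (if (j : ℕ) = (i : ℕ) + 1 then z * g j else 0) := by
      intro j
      rw [hMij]
      split_ifs <;> ring
    simp_rw [h2, Finset.sum_sub_distrib]
    rw [Finset.sum_ite_eq]
    simp only [Finset.mem_univ, if_true]
    by_cases h : (i : ℕ) + 1 < n
    · have h3 : ∑ j : Fin n, (if (j : ℕ) = (i : ℕ) + 1 then z * g j else 0)
          = z * g ⟨(i : ℕ) + 1, h⟩ := by
        rw [Finset.sum_eq_single_of_mem ⟨(i : ℕ) + 1, h⟩ (Finset.mem_univ _)]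
        · simp
        · intro j _ hj
          rw [if_neg]
          intro hc
          exact hj (Fin.ext hc)
      rw [h3]; simp only [hb]
      have hbne : ¬ ((i : ℕ) = n - 1) := by omega
      rw [if_neg hbne]
      have hk : n - 1 - (i : ℕ) = (n - 1 - ((i : ℕ) + 1)) + 1 := by omega
      simp only [hgdef, hk]
      rw [pow_succ]
      ring
    · have hi : (i : ℕ) = n - 1 := by have := i.isLt; omega
      have h3 : ∑ j : Fin n, (if (j : ℕ) = (i : ℕ) + 1 then z * g j else 0) = 0 := by
        apply Finset.sum_eq_zero
        intro j _
        rw [if_neg]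
        have := j.isLt; omega
      rw [h3]; simp only [hb]
      simp only [hgdef, hi, if_pos rfl]
      simp
  have : Gv A b θ = g := by
    unfold Gv
    rw [← hzdef, ← hMdef, ← hMg, Matrix.mulVec_mulVec, Matrix.nonsing_inv_mul M hu,
      Matrix.one_mulVec]
  exact this

lemma Gv_mul {n : ℕ} (hn : 0 < n)
    (A : Matrix (Fin n) (Fin n) ℂ)
    (hA : A = Matrix.of fun i j : Fin n => if (j : ℕ) = (i : ℕ) + 1 then (1 : ℂ) else 0)
    (b : Fin n → ℂ) (hb : b = fun i : Fin n => if (i : ℕ) = n - 1 then (1 : ℂ) else 0)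
    (θ : ℝ) (i j : Fin n) :
    Gv A b θ i * star (Gv A b θ j) = Complex.exp ((θ : ℂ) * Complex.I) ^ ((i : ℤ) - (j : ℤ)) := by
  rw [Gv_eq hn A hA b hb θ]
  set E := Complex.exp ((θ : ℂ) * Complex.I) with hE
  have hEne : E ≠ 0 := Complex.exp_ne_zero _
  have hz : Complex.exp (-(θ : ℂ) * Complex.I) = E⁻¹ := by
    rw [hE, ← Complex.exp_neg]
    ring_nf
  have hstar : (starRingEnd ℂ) (Complex.exp (-(θ : ℂ) * Complex.I)) = E := by
    rw [← Complex.exp_conj]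
    rw [hE]
    congr 1
    simp [Complex.conj_ofReal]
  show _ * (starRingEnd ℂ) _ = _
  simp only []
  rw [map_pow, hstar, hz, inv_pow, ← zpow_natCast E (n - 1 - (j : ℕ)),
    ← zpow_natCast E (n - 1 - (i : ℕ)), ← _root_.zpow_neg, ← zpow_add₀ hEne]
  congr 1
  have hi := i.isLt
  have hj := j.isLt
  omega

lemma restrict_finset_sum {ι : Type*} (s : Finset ι) (μ : ι → MeasureTheory.Measure ℝ) (t : Set ℝ) :
    (∑ i ∈ s, μ i).restrict t = ∑ i ∈ s, (μ i).restrict t := by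
  classical
  induction s using Finset.induction_on with
  | empty => simp
  | insert _ _ h ih => rw [Finset.sum_insert h, Finset.sum_insert h, Measure.restrict_add, ih]


lemma orth (N : ℕ) (hN : 0 < N) (m : ℤ) (hm : m.natAbs < N) :
    ∑ t : Fin N, Complex.exp (((2 * Real.pi * t / N : ℝ) : ℂ) * Complex.I) ^ m
      = if m = 0 then (N : ℂ) else 0 := by
  have hNc : (N : ℂ) ≠ 0 := Nat.cast_ne_zero.mpr hN.ne'
  set ω : ℂ := Complex.exp ((2 * Real.pi * m / N : ℂ) * Complex.I) with hω
  have key : ∀ t : Fin N,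
      Complex.exp (((2 * Real.pi * t / N : ℝ) : ℂ) * Complex.I) ^ m = ω ^ (t : ℕ) := by
    intro t
    rw [← Complex.exp_int_mul, ← Complex.exp_nat_mul]
    congr 1
    push_cast
    field_simp
  simp_rw [key]
  rw [Fin.sum_univ_eq_sum_range (fun t => ω ^ t) N]
  by_cases hm0 : m = 0
  · subst hm0
    simp [hω]
  · rw [if_neg hm0]
    have hωN : ω ^ N = 1 := by
      rw [← Complex.exp_nat_mul]
      have : (N : ℂ) * ((2 * Real.pi * m / N : ℂ) * Complex.I) = (m : ℂ) * (2 * Real.pi * Complex.I) := by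
        field_simp
      rw [this]
      exact_mod_cast Complex.exp_int_mul_two_pi_mul_I m
    have hω1 : ω ≠ 1 := by
      intro h
      rw [hω, Complex.exp_eq_one_iff] at h
      obtain ⟨k, hk⟩ := h
      have hπ : (Real.pi : ℂ) ≠ 0 := by exact_mod_cast Real.pi_ne_zero
      have h2 : (2 * (Real.pi : ℂ) * Complex.I) * (m : ℂ)
          = (2 * (Real.pi : ℂ) * Complex.I) * ((k : ℂ) * N) := by
        field_simp at hk
        linear_combination (2 * (Real.pi : ℂ) * Complex.I) * hk
      have h3 : (m : ℂ) = (k : ℂ) * N :=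
        mul_left_cancel₀ (by simp [hπ, Complex.I_ne_zero]) h2
      have h4 : m = k * N := by exact_mod_cast h3
      have hk0 : k ≠ 0 := by rintro rfl; simp at h4; exact hm0 h4
      have : N ≤ m.natAbs := by
        rw [h4, Int.natAbs_mul]
        have : 1 ≤ k.natAbs := Int.natAbs_pos.mpr hk0
        calc N = 1 * N := (one_mul N).symm
          _ ≤ k.natAbs * (N : ℤ).natAbs := by
              apply Nat.mul_le_mul this
              simp
      omega
    rw [geom_sum_eq hω1, hωN]
    simp

lemma reverse_dir {n : ℕ} (hn : 0 < n) (S : Matrix (Fin n) (Fin n) ℂ)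
    (hS : S.IsHermitian) (hT : IsToeplitz S) :
    ∃ (μ ν : Measure ℝ), IsFiniteMeasure μ ∧ IsFiniteMeasure ν ∧
      ∀ i j : Fin n, S i j = (1 / (2 * Real.pi) : ℝ) *
        ((∫ θ in Set.Ico (0 : ℝ) (2 * Real.pi),
            Complex.exp ((θ : ℂ) * Complex.I) ^ ((i : ℤ) - (j : ℤ)) ∂μ)
          - ∫ θ in Set.Ico (0 : ℝ) (2 * Real.pi),
            Complex.exp ((θ : ℂ) * Complex.I) ^ ((i : ℤ) - (j : ℤ)) ∂ν) := by
  classical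
  -- the Toeplitz symbol coefficients
  set c : ℤ → ℂ := fun d =>
    if h : d.natAbs < n then
      (if 0 ≤ d then S ⟨d.natAbs, h⟩ ⟨0, hn⟩ else S ⟨0, hn⟩ ⟨d.natAbs, h⟩)
    else 0 with hcdef
  have hc : ∀ i j : Fin n, S i j = c ((i : ℤ) - (j : ℤ)) := by
    intro i j
    have hi := i.isLt; have hj := j.isLt
    have hlt : ((i : ℤ) - (j : ℤ)).natAbs < n := by omega
    rw [hcdef]
    simp only [dif_pos hlt]
    by_cases h0 : 0 ≤ (i : ℤ) - (j : ℤ)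
    · rw [if_pos h0]
      exact hT i j ⟨_, hlt⟩ ⟨0, hn⟩ (by simp only [Fin.val_mk]; omega)
    · rw [if_neg h0]
      exact hT i j ⟨0, hn⟩ ⟨_, hlt⟩ (by simp only [Fin.val_mk]; omega)
  have hcconj : ∀ d : ℤ, (starRingEnd ℂ) (c d) = c (-d) := by
    intro d
    by_cases h : d.natAbs < n
    · have h' : (-d).natAbs < n := by omega
      rw [hcdef]
      simp only [dif_pos h, dif_pos h']
      rcases lt_trichotomy d 0 with hd | hd | hd
      · rw [if_neg (by omega), if_pos (by omega)]
        simp_rw [show (-d).natAbs = d.natAbs by omega]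
        rw [← hS.apply ⟨d.natAbs, h⟩ ⟨0, hn⟩]
        rfl
      · subst hd
        simp only [neg_zero, if_pos le_rfl]
        exact hS.apply _ _
      · rw [if_pos (by omega), if_neg (by omega)]
        simp_rw [show (-d).natAbs = d.natAbs by omega]
        rw [← hS.apply ⟨0, hn⟩ ⟨d.natAbs, h⟩]
        rfl
    · have h' : ¬ ((-d).natAbs < n) := by omega
      rw [hcdef]
      simp only [dif_neg h, dif_neg h', map_zero]
  set N : ℕ := 2 * n - 1 with hNdef
  have hNpos : 0 < N := by omega
  set θt : Fin N → ℝ := fun t => 2 * Real.pi * t / N with hθdef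
  set e : Fin N → ℂ := fun t => Complex.exp (((θt t : ℝ) : ℂ) * Complex.I) with hedef
  have hene : ∀ t, e t ≠ 0 := fun t => Complex.exp_ne_zero _
  set D : Finset ℤ := Finset.Icc (-(n : ℤ) + 1) ((n : ℤ) - 1) with hDdef
  set W : Fin N → ℂ :=
    fun t => ((2 * Real.pi / N : ℝ) : ℂ) * ∑ d ∈ D, c d * (e t) ^ (-d) with hWdef
  have horth : ∀ m : ℤ, m.natAbs < N →
      ∑ t : Fin N, (e t) ^ m = if m = 0 then (N : ℂ) else 0 :=
    fun m hm => orth N hNpos m hm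
  have hmom : ∀ m : ℤ, m.natAbs < n →
      ∑ t : Fin N, W t * (e t) ^ m = 2 * Real.pi * c m := by
    intro m hm
    have h1 : ∀ t : Fin N, W t * (e t) ^ m
        = ((2 * Real.pi / N : ℝ) : ℂ) * ∑ d ∈ D, c d * (e t) ^ (m - d) := by
      intro t
      rw [hWdef, mul_assoc]
      congr 1
      rw [Finset.sum_mul]
      apply Finset.sum_congr rfl
      intro d _
      rw [mul_assoc, ← zpow_add₀ (hene t), neg_add_eq_sub]
    simp_rw [h1]
    rw [← Finset.mul_sum, Finset.sum_comm]
    have h2 : ∀ d ∈ D, ∑ t : Fin N, c d * (e t) ^ (m - d)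
        = c d * (if m - d = 0 then (N : ℂ) else 0) := by
      intro d hd
      rw [← Finset.mul_sum, horth (m - d) ?_]
      rw [hDdef, Finset.mem_Icc] at hd
      omega
    rw [Finset.sum_congr rfl h2, Finset.sum_eq_single m]
    · rw [sub_self, if_pos rfl]
      have hNne : ((N : ℝ)) ≠ 0 := Nat.cast_ne_zero.mpr hNpos.ne'
      have hcast : ((2 * Real.pi / N : ℝ) : ℂ) = 2 * (Real.pi : ℂ) / (N : ℂ) := by
        push_cast; ring
      have hNCne : ((N : ℂ)) ≠ 0 := Nat.cast_ne_zero.mpr hNpos.ne'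
      rw [hcast]
      field_simp
    · intro d _ hne
      rw [if_neg (by omega), mul_zero]
    · intro hm'
      exfalso; apply hm'
      rw [hDdef, Finset.mem_Icc]
      omega
  have hWconj : ∀ t, (starRingEnd ℂ) (W t) = W t := by
    intro t
    have hinv : (starRingEnd ℂ) (e t) = (e t)⁻¹ := by
      rw [hedef]
      simp only []
      rw [← Complex.exp_conj, ← Complex.exp_neg]
      congr 1
      simp [Complex.conj_ofReal]
    simp only [hWdef, _root_.map_mul, map_sum, Complex.conj_ofReal]
    congr 1
    refine Finset.sum_nbij' (fun d => -d) (fun d => -d) ?_ ?_ ?_ ?_ ?_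
    · intro a ha
      simp only [hDdef, Finset.mem_Icc] at ha ⊢; omega
    · intro a ha
      simp only [hDdef, Finset.mem_Icc] at ha ⊢; omega
    · intro a _; ring
    · intro a _; ring
    · intro a _
      simp only [hcconj, map_zpow₀, hinv, _root_.inv_zpow', neg_neg]
  have hWre : ∀ t, (((W t).re : ℝ) : ℂ) = W t := fun t => Complex.conj_eq_iff_re.mp (hWconj t)
  have hmemIco : ∀ t : Fin N, θt t ∈ Set.Ico (0 : ℝ) (2 * Real.pi) := by
    intro t
    have hπ := Real.pi_pos
    have ht : (t : ℝ) < (N : ℝ) := by exact_mod_cast t.isLt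
    have htn : (0:ℝ) ≤ (t : ℝ) := by positivity
    have hNpos' : (0:ℝ) < (N : ℝ) := by exact_mod_cast hNpos
    constructor
    · rw [hθdef]; positivity
    · rw [hθdef]
      simp only []
      rw [div_lt_iff₀ hNpos']
      nlinarith
  have hfeq : ∀ m : ℤ, (fun θ : ℝ => Complex.exp ((θ : ℂ) * Complex.I) ^ m)
      = fun θ : ℝ => Complex.exp ((m : ℂ) * ((θ : ℂ) * Complex.I)) := by
    intro m; funext θ; rw [Complex.exp_int_mul]
  have hint : ∀ (m : ℤ) (g : Fin N → ℝ),
      (∫ θ in Set.Ico (0 : ℝ) (2 * Real.pi), Complex.exp ((θ : ℂ) * Complex.I) ^ m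
        ∂(∑ t : Fin N, ENNReal.ofReal (g t) • Measure.dirac (θt t)))
      = ∑ t : Fin N, ((max (g t) 0 : ℝ) : ℂ) * Complex.exp (((θt t : ℝ) : ℂ) * Complex.I) ^ m := by
    intro m g
    rw [restrict_finset_sum]
    have hres : ∀ t : Fin N, (ENNReal.ofReal (g t) • Measure.dirac (θt t)).restrict
        (Set.Ico (0 : ℝ) (2 * Real.pi)) = ENNReal.ofReal (g t) • Measure.dirac (θt t) := by
      intro t
      rw [Measure.restrict_smul, MeasureTheory.restrict_dirac, if_pos (hmemIco t)]
    simp_rw [hres]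
    rw [integral_finset_sum_measure ?_]
    · simp_rw [integral_smul_measure, integral_dirac, ENNReal.toReal_ofReal']
      apply Finset.sum_congr rfl
      intro t _
      rw [Complex.real_smul]
    · intro t _
      have hI : Integrable (fun θ : ℝ => Complex.exp ((θ : ℂ) * Complex.I) ^ m)
          (Measure.dirac (θt t)) := by
        apply (integrable_const (1 : ℝ)).mono'
        · rw [hfeq m]
          exact (Complex.continuous_exp.comp
            (continuous_const.mul (Complex.continuous_ofReal.mul continuous_const))).aestronglyMeasurable
        · filter_upwards with θ
          simp [norm_zpow, Complex.norm_exp_ofReal_mul_I]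
      exact hI.smul_measure ENNReal.ofReal_ne_top
  refine ⟨∑ t : Fin N, ENNReal.ofReal ((W t).re) • Measure.dirac (θt t),
      ∑ t : Fin N, ENNReal.ofReal (-(W t).re) • Measure.dirac (θt t), ?_, ?_, ?_⟩
  · constructor
    rw [Measure.finset_sum_apply]
    refine ENNReal.sum_lt_top.mpr fun t _ => ?_
    simp [Measure.smul_apply]
  · constructor
    rw [Measure.finset_sum_apply]
    refine ENNReal.sum_lt_top.mpr fun t _ => ?_
    simp [Measure.smul_apply]
  · intro i j
    set m : ℤ := (i : ℤ) - (j : ℤ) with hmdef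
    have hmlt : m.natAbs < n := by
      have := i.isLt; have := j.isLt; omega
    rw [hint m _, hint m _, ← Finset.sum_sub_distrib]
    have h3 : ∀ t : Fin N,
        ((max ((W t).re) 0 : ℝ) : ℂ) * Complex.exp (((θt t : ℝ) : ℂ) * Complex.I) ^ m
          - ((max (-(W t).re) 0 : ℝ) : ℂ) * Complex.exp (((θt t : ℝ) : ℂ) * Complex.I) ^ m
        = W t * (e t) ^ m := by
      intro t
      rw [← sub_mul, ← Complex.ofReal_sub, max_zero_sub_max_neg_zero_eq_self, hWre t, hedef]
    rw [Finset.sum_congr rfl (fun t _ => h3 t), hmom m hmlt, hc i j]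
    have hπ : ((Real.pi : ℂ)) ≠ 0 := Complex.ofReal_ne_zero.mpr Real.pi_ne_zero
    push_cast
    field_simp
    rfl


theorem stmt10 {n : ℕ} (hn : 0 < n)
    (A : Matrix (Fin n) (Fin n) ℂ)
    (hA : A = Matrix.of fun i j : Fin n => if (j : ℕ) = (i : ℕ) + 1 then (1 : ℂ) else 0)
    (b : Fin n → ℂ) (hb : b = fun i : Fin n => if (i : ℕ) = n - 1 then (1 : ℂ) else 0)
    (S : Matrix (Fin n) (Fin n) ℂ) (hS : S.IsHermitian) :
    inRangeGamma A b S ↔ IsToeplitz S := by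
  have hkey : ∀ (θ : ℝ) (i j : Fin n),
      Gv A b θ i * star (Gv A b θ j)
        = Complex.exp ((θ : ℂ) * Complex.I) ^ ((i : ℤ) - (j : ℤ)) :=
    fun θ i j => Gv_mul hn A hA b hb θ i j
  constructor
  · rintro ⟨μ, ν, _, _, h⟩
    intro i j k l hij
    simp only [hkey] at h
    rw [h i j, h k l, hij]
  · intro hT
    obtain ⟨μ, ν, h1, h2, h⟩ := reverse_dir hn S hS hT
    refine ⟨μ, ν, h1, h2, fun i j => ?_⟩
    simp only [inRangeGamma, hkey]
    exact h i j
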